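/- Let p ∈ (1,2) and define g(y) = sgn(y)·((|y|+1)^(p-1) − 1). Then for every x ∈ ℝ, (1/2)·x·g(x) ≤ G(x) ≤ x·g(x), where G(x) = ∫₀ˣ g(s) ds = (1/p)·((|x|+1)^p − 1) − |x|. -/
import Mathlib


noncomputable def gfun (p y : ℝ) : ℝ := Real.sign y * ((|y| + 1) ^ (p - 1) - 1)

noncomputable def Gfun (p x : ℝ) : ℝ := ((|x| + 1) ^ p - 1) / p - |x|

/-- Convex conjugate (Legendre transform) of `Gfun p`. -/
noncomputable def Hfun (p s : ℝ) : ℝ := ⨆ y : ℝ, s * y - Gfun p y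

section Aux

variable {p : ℝ}

/-- The auxiliary function whose nonnegativity gives the lower bound. -/
private lemma F_nonneg (hp1 : 1 < p) (hp2 : p < 2) {t : ℝ} (ht : 1 ≤ t) :
    0 ≤ (2 - p) * t ^ p + p * t ^ (p - 1) - p * t + (p - 2) := by
  set F : ℝ → ℝ := fun s => (2 - p) * s ^ p + p * s ^ (p - 1) - p * s + (p - 2) with hF
  have hder : ∀ x : ℝ, 0 < x →
      HasDerivAt F ((2 - p) * (p * x ^ (p - 1)) + p * ((p - 1) * x ^ (p - 1 - 1)) - p) x := by
    intro x hx
    have h1 : HasDerivAt (fun s : ℝ => s ^ p) (p * x ^ (p - 1)) x :=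
      Real.hasDerivAt_rpow_const (Or.inl hx.ne')
    have h2 : HasDerivAt (fun s : ℝ => s ^ (p - 1)) ((p - 1) * x ^ (p - 1 - 1)) x :=
      Real.hasDerivAt_rpow_const (Or.inl hx.ne')
    have h3 : HasDerivAt (fun s : ℝ => p * s) p x := by
      simpa using (hasDerivAt_id x).const_mul p
    exact (((h1.const_mul (2 - p)).add (h2.const_mul p)).sub h3).add_const (p - 2)
  have hmono : MonotoneOn F (Set.Ici (1 : ℝ)) := by
    have hcont : ContinuousOn F (Set.Ici (1 : ℝ)) := fun x hx =>
      ((hder x (lt_of_lt_of_le one_pos hx)).continuousAt).continuousWithinAt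
    refine monotoneOn_of_deriv_nonneg (convex_Ici 1) hcont (fun x hx => ?_) (fun x hx => ?_)
    · rw [interior_Ici] at hx
      exact ((hder x (lt_trans one_pos hx)).differentiableAt).differentiableWithinAt
    · rw [interior_Ici] at hx
      have hx0 : (0 : ℝ) < x := lt_trans one_pos hx
      rw [(hder x hx0).deriv]
      -- AM-GM: (x^(p-1))^(2-p) * (x^(p-1-1))^(p-1) = 1
      have hgm := Real.geom_mean_le_arith_mean2_weighted
        (by linarith : (0:ℝ) ≤ 2 - p) (by linarith : (0:ℝ) ≤ p - 1)
        (Real.rpow_nonneg hx0.le (p - 1)) (Real.rpow_nonneg hx0.le (p - 1 - 1))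
        (by ring)
      have hone : (x ^ (p - 1)) ^ (2 - p) * (x ^ (p - 1 - 1)) ^ (p - 1) = 1 := by
        rw [← Real.rpow_mul hx0.le, ← Real.rpow_mul hx0.le, ← Real.rpow_add hx0]
        rw [show (p - 1) * (2 - p) + (p - 1 - 1) * (p - 1) = 0 by ring, Real.rpow_zero]
      rw [hone] at hgm
      nlinarith [hgm, hp1, hp2]
  have h1 : F 1 = 0 := by
    simp only [hF, Real.one_rpow]; ring
  have := hmono (Set.self_mem_Ici) (Set.mem_Ici.mpr ht) ht
  rw [h1] at this
  exact this

/-- The master scalar inequality, for `t ≥ 1`. -/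
private lemma master (hp1 : 1 < p) (hp2 : p < 2) {t : ℝ} (ht : 1 ≤ t) :
    (1 / 2) * ((t - 1) * (t ^ (p - 1) - 1)) ≤ (t ^ p - 1) / p - (t - 1) ∧
      (t ^ p - 1) / p - (t - 1) ≤ (t - 1) * (t ^ (p - 1) - 1) := by
  have hp0 : (0 : ℝ) < p := by linarith
  have ht0 : (0 : ℝ) < t := lt_of_lt_of_le one_pos ht
  have hA : t ^ p = t * t ^ (p - 1) := by
    have h := Real.rpow_add ht0 1 (p - 1)
    rw [Real.rpow_one, show (1 : ℝ) + (p - 1) = p by ring] at h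
    exact h
  have hh : p * ((t ^ p - 1) / p) = t ^ p - 1 := mul_div_cancel₀ _ hp0.ne'
  constructor
  · have hF := F_nonneg hp1 hp2 ht
    nlinarith [hF, hh, hA]
  · -- Bernoulli with s = 1/t - 1
    have hs : (-1 : ℝ) ≤ 1 / t - 1 := by
      have : (0 : ℝ) ≤ 1 / t := by positivity
      linarith
    have hB := one_add_mul_self_le_rpow_one_add hs hp1.le
    rw [show (1 : ℝ) + (1 / t - 1) = 1 / t by ring] at hB
    have hinv : (1 / t) ^ p = (t ^ p)⁻¹ := by
      rw [one_div, Real.inv_rpow ht0.le]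
    rw [hinv] at hB
    have htp : (0 : ℝ) < t ^ p := Real.rpow_pos_of_pos ht0 p
    have hmul : (1 + p * (1 / t - 1)) * t ^ p ≤ 1 := by
      calc (1 + p * (1 / t - 1)) * t ^ p ≤ (t ^ p)⁻¹ * t ^ p :=
            mul_le_mul_of_nonneg_right hB htp.le
        _ = 1 := inv_mul_cancel₀ htp.ne'
    have hcc : t ^ p * (1 / t) = t ^ (p - 1) := by
      rw [hA]; field_simp
    nlinarith [hmul, hh, hA, hcc, htp]

end Aux

theorem xg_between_G (p : ℝ) (hp1 : 1 < p) (hp2 : p < 2) (x : ℝ) :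
    (1 / 2) * (x * gfun p x) ≤ Gfun p x ∧ Gfun p x ≤ x * gfun p x := by
  have hxg : x * gfun p x = (|x| + 1 - 1) * ((|x| + 1) ^ (p - 1) - 1) := by
    unfold gfun
    rcases lt_trichotomy x 0 with h | h | h
    · rw [Real.sign_of_neg h, abs_of_neg h]; ring
    · simp [h]
    · rw [Real.sign_of_pos h, abs_of_pos h]; ring
  have hG : Gfun p x = ((|x| + 1) ^ p - 1) / p - (|x| + 1 - 1) := by
    unfold Gfun; ring_nf
  have ht : (1 : ℝ) ≤ |x| + 1 := by
    have := abs_nonneg x; linarith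
  obtain ⟨h1, h2⟩ := master hp1 hp2 ht
  rw [hxg, hG]
  exact ⟨h1, h2⟩
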